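/- Let S ⊆ ℤ^m and T ⊆ ℤ^n be vector semigroups and π : S → T a semigroup homomorphism (π(x+y) = π(x) + π(y) for all x, y ∈ S, and π(0) = 0 if 0 ∈ S). Then π extends to a linear operator from lin(S) to lin(T). -/

import Mathlib

open Set Filter Topology MeasureTheory ProbabilityTheory Pointwise

noncomputable section

/-- Coercion of an integer vector to a real vector. -/
def zc {m : ℕ} (x : Fin m → ℤ) : Fin m → ℝ := fun i => (x i : ℝ)

/-- Convex conical hull: all finite nonnegative real combinations of elements of `A`. -/
def coneHull {m : ℕ} (A : Set (Fin m → ℝ)) : Set (Fin m → ℝ) :=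
  { x | ∃ (s : Finset (Fin m → ℝ)) (w : (Fin m → ℝ) → ℝ),
      ↑s ⊆ A ∧ (∀ a ∈ s, 0 ≤ w a) ∧ x = ∑ a ∈ s, w a • a }

/-- Coercion of an integer vector to a rational vector. -/
def qc {m : ℕ} (x : Fin m → ℤ) : Fin m → ℚ := fun i => (x i : ℚ)

lemma qc_injective {m : ℕ} : Function.Injective (qc (m := m)) := by
  intro a b h
  funext i
  have hi : (a i : ℚ) = (b i : ℚ) := congrFun h i
  exact_mod_cast hi

/-- `qc` as an `ℤ`-linear map. -/
def qcL {m : ℕ} : (Fin m → ℤ) →ₗ[ℤ] (Fin m → ℚ) where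
  toFun := qc
  map_add' x y := by funext i; simp [qc]
  map_smul' r x := by funext i; simp [qc]

lemma qcL_apply {m : ℕ} (x : Fin m → ℤ) : qcL x = qc x := rfl

lemma toNat_smul_sub {V : Type*} [AddCommGroup V] (b : ℤ) (y : V) :
    b.toNat • y - (-b).toNat • y = b • y := by
  rw [← natCast_zsmul, ← natCast_zsmul, ← sub_smul, Int.toNat_sub_toNat_neg]

section aux

variable {m n : ℕ} {S : Set (Fin m → ℤ)} {π : (Fin m → ℤ) → (Fin n → ℤ)}

lemma listA (hSadd : ∀ x ∈ S, ∀ y ∈ S, x + y ∈ S)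
    (hhom : ∀ x ∈ S, ∀ y ∈ S, π (x + y) = π x + π y) :
    ∀ l : List (Fin m → ℤ), l ≠ [] → (∀ z ∈ l, z ∈ S) →
      l.sum ∈ S ∧ π l.sum = (l.map π).sum := by
  intro l
  induction l with
  | nil => intro h; exact absurd rfl h
  | cons z t ih =>
    intro _ hmem
    have hz : z ∈ S := hmem z List.mem_cons_self
    by_cases ht : t = []
    · subst ht; simp [hz]
    · obtain ⟨hts, htp⟩ := ih ht (fun w hw => hmem w (List.mem_cons_of_mem z hw))
      constructor
      · rw [List.sum_cons]; exact hSadd z hz t.sum hts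
      · rw [List.sum_cons, List.map_cons, List.sum_cons, hhom z hz t.sum hts, htp]

lemma listD (hSadd : ∀ x ∈ S, ∀ y ∈ S, x + y ∈ S)
    (hhom : ∀ x ∈ S, ∀ y ∈ S, π (x + y) = π x + π y)
    (h0 : (0 : Fin m → ℤ) ∈ S → π 0 = 0) :
    ∀ P Q : List (Fin m → ℤ), (∀ z ∈ P, z ∈ S) → (∀ z ∈ Q, z ∈ S) →
      P.sum = Q.sum → (P.map π).sum = (Q.map π).sum := by
  intro P Q hP hQ hsum
  by_cases hpe : P = []
  · subst hpe
    by_cases hqe : Q = []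
    · subst hqe; rfl
    · obtain ⟨hqs, hqp⟩ := listA hSadd hhom Q hqe hQ
      simp only [List.sum_nil] at hsum
      have h0S : (0 : Fin m → ℤ) ∈ S := by rw [hsum]; exact hqs
      simp only [List.map_nil, List.sum_nil]
      rw [← hqp, ← hsum]
      exact (h0 h0S).symm
  · by_cases hqe : Q = []
    · subst hqe
      obtain ⟨hps, hpp⟩ := listA hSadd hhom P hpe hP
      simp only [List.sum_nil] at hsum
      have h0S : (0 : Fin m → ℤ) ∈ S := by rw [← hsum]; exact hps
      simp only [List.map_nil, List.sum_nil]
      rw [← hpp, hsum]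
      exact h0 h0S
    · obtain ⟨_, hpp⟩ := listA hSadd hhom P hpe hP
      obtain ⟨_, hqp⟩ := listA hSadd hhom Q hqe hQ
      rw [← hpp, ← hqp, hsum]

lemma listE {V W : Type*} [AddCommMonoid V] [AddCommMonoid W] (g : V → W) :
    ∀ (k : ℕ) (f : Fin k → ℕ) (x : Fin k → V), ∃ l : List V,
      (∀ z ∈ l, ∃ i, z = x i) ∧ l.sum = ∑ i, f i • x i ∧
      (l.map g).sum = ∑ i, f i • g (x i) := by
  intro k
  induction k with
  | zero => intro f x; exact ⟨[], by simp, by simp, by simp⟩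
  | succ k ih =>
    intro f x
    obtain ⟨t, ht1, ht2, ht3⟩ := ih (fun i => f i.succ) (fun i => x i.succ)
    refine ⟨List.replicate (f 0) (x 0) ++ t, ?_, ?_, ?_⟩
    · intro z hz
      rcases List.mem_append.1 hz with h | h
      · exact ⟨0, List.eq_of_mem_replicate h⟩
      · obtain ⟨i, hi⟩ := ht1 z h; exact ⟨i.succ, hi⟩
    · rw [List.sum_append, List.sum_replicate, ht2, Fin.sum_univ_succ]
    · rw [List.map_append, List.map_replicate, List.sum_append, List.sum_replicate,
        ht3, Fin.sum_univ_succ]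

lemma keyC (hSadd : ∀ x ∈ S, ∀ y ∈ S, x + y ∈ S)
    (hhom : ∀ x ∈ S, ∀ y ∈ S, π (x + y) = π x + π y)
    (h0 : (0 : Fin m → ℤ) ∈ S → π 0 = 0) :
    ∀ (k : ℕ) (a : Fin k → ℤ) (x : Fin k → (Fin m → ℤ)), (∀ i, x i ∈ S) →
      ∑ i, a i • x i = 0 → ∑ i, a i • π (x i) = 0 := by
  intro k a x hx hsum
  obtain ⟨P, hP1, hP2, hP3⟩ := listE π k (fun i => (a i).toNat) x
  obtain ⟨Q, hQ1, hQ2, hQ3⟩ := listE π k (fun i => (-(a i)).toNat) x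
  have hPQ : P.sum = Q.sum := by
    rw [hP2, hQ2, ← sub_eq_zero, ← Finset.sum_sub_distrib]
    calc ∑ i, ((a i).toNat • x i - (-(a i)).toNat • x i)
        = ∑ i, a i • x i := Finset.sum_congr rfl (fun i _ => toNat_smul_sub (a i) (x i))
      _ = 0 := hsum
  have hPS : ∀ z ∈ P, z ∈ S := fun z hz => by obtain ⟨i, rfl⟩ := hP1 z hz; exact hx i
  have hQS : ∀ z ∈ Q, z ∈ S := fun z hz => by obtain ⟨i, rfl⟩ := hQ1 z hz; exact hx i
  have hmap : (P.map π).sum = (Q.map π).sum := listD hSadd hhom h0 P Q hPS hQS hPQ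
  have : ∑ i, a i • π (x i)
      = ∑ i, ((a i).toNat • π (x i) - (-(a i)).toNat • π (x i)) :=
    Finset.sum_congr rfl (fun i _ => (toNat_smul_sub (a i) (π (x i))).symm)
  rw [this, Finset.sum_sub_distrib, ← hP3, ← hQ3, hmap, sub_self]

lemma keySpan (hSadd : ∀ x ∈ S, ∀ y ∈ S, x + y ∈ S)
    (hhom : ∀ x ∈ S, ∀ y ∈ S, π (x + y) = π x + π y)
    (h0 : (0 : Fin m → ℤ) ∈ S → π 0 = 0) (w : Fin n → ℚ)
    (hw : ((0 : Fin m → ℚ), w) ∈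
      Submodule.span ℚ ((fun x => (qc x, qc (π x))) '' S)) : w = 0 := by
  rw [Submodule.mem_span_set'] at hw
  obtain ⟨k, c, g, hg⟩ := hw
  have hmem : ∀ i : Fin k, ∃ x, x ∈ S ∧ (qc x, qc (π x)) = (g i : (Fin m → ℚ) × (Fin n → ℚ)) :=
    fun i => (g i).2
  choose x hxS hxe using hmem
  have hg' : ∑ i, c i • ((qc (x i), qc (π (x i))) : (Fin m → ℚ) × (Fin n → ℚ))
      = ((0 : Fin m → ℚ), w) := by
    rw [← hg]; exact Finset.sum_congr rfl fun i _ => by rw [hxe i]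
  have h1 := congrArg (LinearMap.fst ℚ (Fin m → ℚ) (Fin n → ℚ)) hg'
  have h2 := congrArg (LinearMap.snd ℚ (Fin m → ℚ) (Fin n → ℚ)) hg'
  simp only [map_sum, LinearMap.map_smul, LinearMap.fst_apply] at h1
  simp only [map_sum, LinearMap.map_smul, LinearMap.snd_apply] at h2
  -- clear denominators
  set N : ℕ := ∏ i, (c i).den with hN
  have hNpos : 0 < N := Finset.prod_pos (fun i _ => (c i).pos)
  have ha : ∀ i : Fin k, ∃ a : ℤ, (a : ℚ) = c i * N := by
    intro i
    obtain ⟨t, ht⟩ := Finset.dvd_prod_of_mem (fun j : Fin k => (c j).den) (Finset.mem_univ i)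
    refine ⟨(c i).num * t, ?_⟩
    have htq : (N : ℚ) = ((c i).den : ℚ) * (t : ℚ) := by
      rw [hN]; exact_mod_cast congrArg (fun z : ℕ => (z : ℚ)) ht
    rw [htq]
    push_cast
    rw [← Rat.mul_den_eq_num (c i)]
    ring
  choose a haa using ha
  -- integer relation on first components
  have h1' : ∑ i, (a i : ℚ) • qc (x i) = 0 := by
    have hNs := congrArg (fun v : Fin m → ℚ => (N : ℚ) • v) h1
    simp only [Finset.smul_sum, smul_zero] at hNs
    rw [← hNs]
    refine Finset.sum_congr rfl fun i _ => ?_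
    rw [smul_smul]
    congr 1
    rw [haa i]; ring
  have hxint : ∑ i, a i • x i = 0 := by
    apply qc_injective
    have hq : qc (∑ i, a i • x i) = ∑ i, (a i : ℚ) • qc (x i) := by
      rw [← qcL_apply, map_sum]
      refine Finset.sum_congr rfl fun i _ => ?_
      rw [LinearMap.map_smul, qcL_apply, ← Int.cast_smul_eq_zsmul ℚ]
    rw [hq, h1']
    funext i; simp [qc]
  have hπint : ∑ i, a i • π (x i) = 0 := keyC hSadd hhom h0 k a x hxS hxint
  have h2' : (N : ℚ) • w = 0 := by
    have hNs := congrArg (fun v : Fin n → ℚ => (N : ℚ) • v) h2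
    simp only [Finset.smul_sum] at hNs
    have : ∑ i, (N : ℚ) • c i • qc (π (x i)) = ∑ i, (a i : ℚ) • qc (π (x i)) := by
      refine Finset.sum_congr rfl fun i _ => ?_
      rw [smul_smul]
      congr 1
      rw [haa i]; ring
    rw [this] at hNs
    rw [← hNs]
    have hq : (0 : Fin n → ℚ) = qc (∑ i, a i • π (x i)) := by
      rw [hπint]; funext i; simp [qc]
    rw [hq, ← qcL_apply, map_sum]
    refine Finset.sum_congr rfl fun i _ => ?_
    rw [LinearMap.map_smul, qcL_apply, ← Int.cast_smul_eq_zsmul ℚ]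
  have hNne : (N : ℚ) ≠ 0 := by exact_mod_cast hNpos.ne'
  rcases smul_eq_zero.mp h2' with h | h
  · exact absurd h hNne
  · exact h

end aux

/-- a semigroup homomorphism `π : S → T` between vector semigroups
extends to a linear operator from `lin(S)` to `lin(T)`. -/
theorem stmt10 {m n : ℕ} (S : Set (Fin m → ℤ)) (T : Set (Fin n → ℤ))
    (hSne : S.Nonempty) (hSadd : ∀ x ∈ S, ∀ y ∈ S, x + y ∈ S)
    (hTne : T.Nonempty) (hTadd : ∀ x ∈ T, ∀ y ∈ T, x + y ∈ T)
    (π : (Fin m → ℤ) → (Fin n → ℤ)) (hπT : ∀ x ∈ S, π x ∈ T)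
    (hhom : ∀ x ∈ S, ∀ y ∈ S, π (x + y) = π x + π y)
    (h0 : (0 : Fin m → ℤ) ∈ S → π 0 = 0) :
    ∃ u : (Fin m → ℝ) →ₗ[ℝ] (Fin n → ℝ),
      (∀ x ∈ S, u (zc x) = zc (π x)) ∧
      ∀ v ∈ Submodule.span ℝ (zc '' S), u v ∈ Submodule.span ℝ (zc '' T) := by
  classical
  set G : Set ((Fin m → ℚ) × (Fin n → ℚ)) := (fun x => (qc x, qc (π x))) '' S with hG
  set W : Submodule ℚ ((Fin m → ℚ) × (Fin n → ℚ)) := Submodule.span ℚ G with hW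
  let p1 : W →ₗ[ℚ] (Fin m → ℚ) := (LinearMap.fst ℚ (Fin m → ℚ) (Fin n → ℚ)).comp W.subtype
  have hker : ∀ q : W, p1 q = 0 → q = 0 := by
    rintro ⟨⟨v1, v2⟩, hv⟩ hq
    have hv1 : v1 = 0 := hq
    subst hv1
    have hv2 : v2 = 0 := keySpan hSadd hhom h0 v2 hv
    subst hv2
    rfl
  have hinj : Function.Injective p1 := by
    intro q q' h
    have := hker (q - q') (by rw [map_sub, h, sub_self])
    exact sub_eq_zero.mp this
  obtain ⟨C, hC⟩ := Submodule.exists_isCompl (LinearMap.range p1)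
  let proj := (LinearMap.range p1).linearProjOfIsCompl C hC
  let e : W ≃ₗ[ℚ] LinearMap.range p1 := LinearEquiv.ofInjective p1 hinj
  let u₀ : (Fin m → ℚ) →ₗ[ℚ] (Fin n → ℚ) :=
    (LinearMap.snd ℚ (Fin m → ℚ) (Fin n → ℚ)).comp
      (W.subtype.comp ((e.symm : (LinearMap.range p1) →ₗ[ℚ] W).comp proj))
  have hu₀ : ∀ x ∈ S, u₀ (qc x) = qc (π x) := by
    intro x hx
    have hmemW : ((qc x, qc (π x)) : (Fin m → ℚ) × (Fin n → ℚ)) ∈ W :=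
      Submodule.subset_span ⟨x, hx, rfl⟩
    set wx : W := ⟨(qc x, qc (π x)), hmemW⟩ with hwx
    have hR : qc x ∈ LinearMap.range p1 := ⟨wx, rfl⟩
    have hproj : proj (qc x) = ⟨qc x, hR⟩ :=
      Submodule.linearProjOfIsCompl_apply_left hC ⟨qc x, hR⟩
    have hesymm : e.symm ⟨qc x, hR⟩ = wx := by
      rw [LinearEquiv.symm_apply_eq]
      refine Subtype.ext ?_
      show qc x = ((e wx : (LinearMap.range p1)) : Fin m → ℚ)
      rw [LinearEquiv.ofInjective_apply]
      rfl
    show (LinearMap.snd ℚ (Fin m → ℚ) (Fin n → ℚ))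
        ((W.subtype) ((e.symm : (LinearMap.range p1) →ₗ[ℚ] W) (proj (qc x)))) = qc (π x)
    rw [hproj]
    have : ((e.symm : (LinearMap.range p1) →ₗ[ℚ] W) ⟨qc x, hR⟩) = wx := hesymm
    rw [this]
    rfl
  -- lift to ℝ via the matrix of u₀
  let M : Matrix (Fin n) (Fin m) ℝ := (LinearMap.toMatrix' u₀).map (fun q : ℚ => (q : ℝ))
  have hmain : ∀ x ∈ S, (Matrix.mulVecLin M) (zc x) = zc (π x) := by
    intro x hx
    have h := hu₀ x hx
    funext j
    have hq : ∀ v : Fin m → ℚ, ∑ i, LinearMap.toMatrix' u₀ j i * v i = u₀ v j := by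
      intro v
      have hmv : (LinearMap.toMatrix' u₀).mulVec v = u₀ v := by
        rw [← Matrix.toLin'_apply, Matrix.toLin'_toMatrix']
      rw [← hmv]
      simp [Matrix.mulVec, dotProduct]
    have hq2 : ∑ i, LinearMap.toMatrix' u₀ j i * ((x i : ℚ)) = ((π x j : ℚ)) := by
      have hqx := hq (qc x)
      rw [h] at hqx
      exact hqx
    have hcast := congrArg (fun q : ℚ => (q : ℝ)) hq2
    push_cast at hcast
    simpa [M, Matrix.mulVecLin, Matrix.mulVec, dotProduct, zc] using hcast
  refine ⟨Matrix.mulVecLin M, hmain, ?_⟩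
  intro v hv
  induction hv using Submodule.span_induction with
  | mem y hy =>
    obtain ⟨x, hx, rfl⟩ := hy
    rw [hmain x hx]
    exact Submodule.subset_span ⟨π x, hπT x hx, rfl⟩
  | zero => rw [map_zero]; exact Submodule.zero_mem _
  | add y z hy' hz' hy hz => rw [map_add]; exact Submodule.add_mem _ hy hz
  | smul r y hy' hy => rw [_root_.map_smul]; exact Submodule.smul_mem _ r hy
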